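/- (Identification of δ via conditional ATN marginalized over the treated; combination of the steps in the proof of Lemma 1.) Under consistency of the potential outcomes and Assumptions (A5) and (A6), for any bounded measurable w : ℝ^q → ℝ and any version f of E[Y₁^{(0,1)} − Y₁^{(0,0)} ∣ G=N, X], one has E[ w(X) · ( 1{G=N}/e_N(X) − 1{G=C}/e_C(X) ) · ΔY ] = E[ w(X) · f(X) ]. In particular, taking w = e_T/p_T shows that δ := E[(Y₁^{(1,1)} − Y₁^{(1,0)})·1{G=T}]/p_T equals the conditional spillover effect on neighboring controls marginalized over the treated group's covariate distribution. -/

import Mathlib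

open MeasureTheory ProbabilityTheory Filter Topology

/-- Group label: `T` = treated (`g(A)=(1,0)`), `N` = neighboring control (`g(A)=(0,1)`),
`C` = non-neighboring control (`g(A)=(0,0)`). -/
inductive GLabel : Type
  | T | N | C
  deriving DecidableEq

instance : MeasurableSpace GLabel := ⊤

/-- The σ-algebra `𝔛` generated by the covariates `X`. -/
def sigmaX {Ω : Type} {q : ℕ} (X : Ω → (Fin q → ℝ)) : MeasurableSpace Ω :=
  MeasurableSpace.comap X inferInstance

/-- The indicator `1{G = g}` as a real-valued function. -/
def indG {Ω : Type} (G : Ω → GLabel) (g : GLabel) (ω : Ω) : ℝ :=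
  if G ω = g then 1 else 0

/-- `f` is a version of the conditional expectation `E[Z ∣ G = g, X]`:
it is measurable and `E[Z·1{G=g} ∣ 𝔛] = f(X)·e_g(X)` `P`-a.s. -/
def IsCondVersion {Ω : Type} [MeasurableSpace Ω] (P : Measure Ω) {q : ℕ}
    (X : Ω → (Fin q → ℝ)) (G : Ω → GLabel) (e : GLabel → (Fin q → ℝ) → ℝ)
    (g : GLabel) (Z : Ω → ℝ) (f : (Fin q → ℝ) → ℝ) : Prop :=
  Measurable f ∧
    P[(fun ω => Z ω * indG G g ω) | sigmaX X] =ᵐ[P] (fun ω => f (X ω) * e g (X ω))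


section Aux

open MeasureTheory

variable {Ω : Type} [MeasurableSpace Ω] (P : Measure Ω) [IsProbabilityMeasure P]
  {q : ℕ} {X : Ω → (Fin q → ℝ)}

lemma measurable_indG {G : Ω → GLabel} (hG : Measurable G) (g : GLabel) :
    Measurable (indG G g) := by
  unfold indG
  have : MeasurableSet {a | G a = g} := hG (show MeasurableSet {g} from trivial)
  exact Measurable.ite this measurable_const measurable_const

lemma indG_abs_le {G : Ω → GLabel} (g : GLabel) (ω : Ω) : ‖indG G g ω‖ ≤ 1 := by
  unfold indG; split <;> simp

lemma integrable_mul_indG {G : Ω → GLabel} (hG : Measurable G) {Z : Ω → ℝ}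
    (hZ : Integrable Z P) (g : GLabel) :
    Integrable (fun ω => Z ω * indG G g ω) P := by
  have : (fun ω => Z ω * indG G g ω) = fun ω => indG G g ω * Z ω :=
    funext fun ω => mul_comm _ _
  rw [this]
  exact hZ.bdd_mul (c := 1) (measurable_indG hG g).aestronglyMeasurable (ae_of_all _ (indG_abs_le g))

lemma aux_key (hX : Measurable X)
    (h : (Fin q → ℝ) → ℝ) (hh : Measurable h) (C : ℝ) (hC : ∀ x, |h x| ≤ C)
    (Z : Ω → ℝ) (hZ : Integrable Z P) :
    ∫ ω, h (X ω) * Z ω ∂P = ∫ ω, h (X ω) * (P[Z | sigmaX X]) ω ∂P := by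
  have hm : sigmaX X ≤ ‹MeasurableSpace Ω› := hX.comap_le
  haveI : SigmaFinite (P.trim hm) := inferInstance
  have hXm : Measurable[sigmaX X] X := Measurable.of_comap_le le_rfl
  have hsm : StronglyMeasurable[sigmaX X] (fun ω => h (X ω)) :=
    (hh.comp hXm).stronglyMeasurable
  have hint : Integrable (fun ω => h (X ω) * Z ω) P :=
    hZ.bdd_mul (c := C) ((hh.comp hX)).aestronglyMeasurable
      (ae_of_all _ fun ω => by simpa using hC (X ω))
  have hpull : P[(fun ω => h (X ω)) * Z | sigmaX X]
      =ᵐ[P] (fun ω => h (X ω)) * P[Z | sigmaX X] :=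
    condExp_mul_of_stronglyMeasurable_left hsm hint hZ
  calc ∫ ω, h (X ω) * Z ω ∂P
      = ∫ ω, (P[(fun ω => h (X ω)) * Z | sigmaX X]) ω ∂P :=
        (integral_condExp hm).symm
    _ = ∫ ω, h (X ω) * (P[Z | sigmaX X]) ω ∂P := by
        refine integral_congr_ae (hpull.mono fun ω hω => ?_)
        simpa using hω

lemma aux_key2 (hX : Measurable X) {G : Ω → GLabel} (hG : Measurable G)
    {e : GLabel → (Fin q → ℝ) → ℝ}
    (h : (Fin q → ℝ) → ℝ) (hh : Measurable h) (C : ℝ) (hC : ∀ x, |h x| ≤ C)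
    {Z : Ω → ℝ} (hZ : Integrable Z P) {g : GLabel} {φ : (Fin q → ℝ) → ℝ}
    (hver : IsCondVersion P X G e g Z φ) :
    ∫ ω, h (X ω) * (Z ω * indG G g ω) ∂P
      = ∫ ω, h (X ω) * (φ (X ω) * e g (X ω)) ∂P := by
  rw [aux_key P hX h hh C hC _ (integrable_mul_indG P hG hZ g)]
  refine integral_congr_ae (hver.2.mono fun ω hω => ?_)
  simp only at hω ⊢
  rw [hω]

end Aux

theorem stmt_19
    {Ω : Type} [MeasurableSpace Ω] (P : Measure Ω) [IsProbabilityMeasure P]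
    {q : ℕ} (X : Ω → (Fin q → ℝ)) (hX : Measurable X)
    (G : Ω → GLabel) (hG : Measurable G)
    (Y0 Y1 : Ω → ℝ) (hY0 : Integrable Y0 P) (hY1 : Integrable Y1 P)
    (e : GLabel → (Fin q → ℝ) → ℝ) (he : ∀ g, Measurable (e g))
    (he1 : ∀ g x, e g x ≤ 1)
    (hprop : ∀ g : GLabel,
      P[(fun ω => indG G g ω) | sigmaX X] =ᵐ[P] (fun ω => e g (X ω)))
    (ε : ℝ) (hε : 0 < ε) (hpos : ∀ g x, ε ≤ e g x)
    (hpT : 0 < (P {ω | G ω = GLabel.T}).toReal)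
    (Y110 Y111 Y101 Y100 Y000 : Ω → ℝ)
    (hI10 : Integrable Y110 P) (hI11 : Integrable Y111 P)
    (hI01 : Integrable Y101 P) (hI00 : Integrable Y100 P) (hI000 : Integrable Y000 P)
    (hconsT : ∀ᵐ ω ∂P, G ω = GLabel.T → Y1 ω = Y110 ω)
    (hconsN : ∀ᵐ ω ∂P, G ω = GLabel.N → Y1 ω = Y101 ω)
    (hconsC : ∀ᵐ ω ∂P, G ω = GLabel.C → Y1 ω = Y100 ω)
    (hcons0 : Y0 =ᵐ[P] Y000)
    (fT fN : (Fin q → ℝ) → ℝ)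
    (hfT : IsCondVersion P X G e GLabel.T (fun ω => Y110 ω - Y111 ω) fT)
    (hfN : IsCondVersion P X G e GLabel.N (fun ω => Y101 ω - Y100 ω) fN)
    (hA5 : ∀ᵐ ω ∂P, fT (X ω) + fN (X ω) = 0)
    (gN gC : (Fin q → ℝ) → ℝ)
    (hgN : IsCondVersion P X G e GLabel.N (fun ω => Y100 ω - Y000 ω) gN)
    (hgC : IsCondVersion P X G e GLabel.C (fun ω => Y100 ω - Y000 ω) gC)
    (hA6 : ∀ᵐ ω ∂P, gN (X ω) = gC (X ω))
    (w : (Fin q → ℝ) → ℝ) (hw : Measurable w) (M : ℝ) (hwM : ∀ x, |w x| ≤ M)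
    (f : (Fin q → ℝ) → ℝ)
    (hf : IsCondVersion P X G e GLabel.N (fun ω => Y101 ω - Y100 ω) f)
    :
    (∫ ω, w (X ω) *
          (indG G GLabel.N ω / e GLabel.N (X ω) - indG G GLabel.C ω / e GLabel.C (X ω)) *
          (Y1 ω - Y0 ω) ∂P
        = ∫ ω, w (X ω) * f (X ω) ∂P) ∧
      ((∫ ω, (Y111 ω - Y110 ω) * indG G GLabel.T ω ∂P) / (P {ω | G ω = GLabel.T}).toReal
        = ∫ ω, (e GLabel.T (X ω) / (P {ω | G ω = GLabel.T}).toReal) * f (X ω) ∂P) := by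
  have hm : sigmaX X ≤ ‹MeasurableSpace Ω› := hX.comap_le
  have heN0 : ∀ x, e GLabel.N x ≠ 0 := fun x => ne_of_gt (lt_of_lt_of_le hε (hpos _ x))
  have heC0 : ∀ x, e GLabel.C x ≠ 0 := fun x => ne_of_gt (lt_of_lt_of_le hε (hpos _ x))
  -- bounded weight functions w/eN, w/eC
  set wN : (Fin q → ℝ) → ℝ := fun x => w x / e GLabel.N x with hwN_def
  set wC : (Fin q → ℝ) → ℝ := fun x => w x / e GLabel.C x with hwC_def
  have hbound : ∀ g : GLabel, ∀ x, |w x / e g x| ≤ M / ε := by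
    intro g x
    rw [abs_div, abs_of_pos (lt_of_lt_of_le hε (hpos g x))]
    exact div_le_div₀ (le_trans (abs_nonneg _) (hwM x)) (hwM x) hε (hpos g x)
  have hwNm : Measurable wN := hw.div (he _)
  have hwCm : Measurable wC := hw.div (he _)
  -- f(X) = fN(X) a.e.
  have hffN : ∀ᵐ ω ∂P, f (X ω) = fN (X ω) := by
    filter_upwards [hf.2.symm.trans hfN.2] with ω hω
    exact mul_right_cancel₀ (heN0 (X ω)) hω
  constructor
  · -- Part 1
    have hsplit : (fun ω => w (X ω) *
          (indG G GLabel.N ω / e GLabel.N (X ω) - indG G GLabel.C ω / e GLabel.C (X ω)) *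
          (Y1 ω - Y0 ω))
        =ᵐ[P] fun ω =>
          wN (X ω) * ((Y101 ω - Y100 ω) * indG G GLabel.N ω)
          + wN (X ω) * ((Y100 ω - Y000 ω) * indG G GLabel.N ω)
          - wC (X ω) * ((Y100 ω - Y000 ω) * indG G GLabel.C ω) := by
      filter_upwards [hconsN, hconsC, hcons0] with ω h1 h2 h0
      rcases hg : G ω with _ | _ | _
      · simp [indG, hg]
      · rw [h1 hg, h0]
        simp only [indG, hg, hwN_def, hwC_def, reduceCtorEq, reduceIte, if_true, if_false]
        ring
      · rw [h2 hg, h0]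
        simp only [indG, hg, hwN_def, hwC_def, reduceCtorEq, reduceIte, if_true, if_false]
        ring
    rw [integral_congr_ae hsplit]
    have hIf : Integrable (fun ω => Y101 ω - Y100 ω) P := hI01.sub hI00
    have hIg : Integrable (fun ω => Y100 ω - Y000 ω) P := hI00.sub hI000
    have int1 : Integrable (fun ω =>
        wN (X ω) * ((Y101 ω - Y100 ω) * indG G GLabel.N ω)) P :=
      (integrable_mul_indG P hG hIf _).bdd_mul (c := M / ε) (hwNm.comp hX).aestronglyMeasurable
        (ae_of_all _ fun ω => by simpa using hbound GLabel.N (X ω))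
    have int2 : Integrable (fun ω =>
        wN (X ω) * ((Y100 ω - Y000 ω) * indG G GLabel.N ω)) P :=
      (integrable_mul_indG P hG hIg _).bdd_mul (c := M / ε) (hwNm.comp hX).aestronglyMeasurable
        (ae_of_all _ fun ω => by simpa using hbound GLabel.N (X ω))
    have int3 : Integrable (fun ω =>
        wC (X ω) * ((Y100 ω - Y000 ω) * indG G GLabel.C ω)) P :=
      (integrable_mul_indG P hG hIg _).bdd_mul (c := M / ε) (hwCm.comp hX).aestronglyMeasurable
        (ae_of_all _ fun ω => by simpa using hbound GLabel.C (X ω))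
    have int12 : Integrable (fun ω =>
        wN (X ω) * ((Y101 ω - Y100 ω) * indG G GLabel.N ω)
        + wN (X ω) * ((Y100 ω - Y000 ω) * indG G GLabel.N ω)) P := int1.add int2
    rw [integral_sub int12 int3, integral_add int1 int2]
    have e1 : ∫ ω, wN (X ω) * ((Y101 ω - Y100 ω) * indG G GLabel.N ω) ∂P
        = ∫ ω, w (X ω) * f (X ω) ∂P := by
      rw [aux_key2 P hX hG wN hwNm (M / ε) (hbound GLabel.N) hIf hf]
      refine integral_congr_ae (Filter.Eventually.of_forall fun ω => ?_)
      simp only [hwN_def]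
      have := heN0 (X ω)
      field_simp
    have e2 : ∫ ω, wN (X ω) * ((Y100 ω - Y000 ω) * indG G GLabel.N ω) ∂P
        = ∫ ω, w (X ω) * gN (X ω) ∂P := by
      rw [aux_key2 P hX hG wN hwNm (M / ε) (hbound GLabel.N) hIg hgN]
      refine integral_congr_ae (Filter.Eventually.of_forall fun ω => ?_)
      simp only [hwN_def]
      have := heN0 (X ω)
      field_simp
    have e3 : ∫ ω, wC (X ω) * ((Y100 ω - Y000 ω) * indG G GLabel.C ω) ∂P
        = ∫ ω, w (X ω) * gN (X ω) ∂P := by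
      rw [aux_key2 P hX hG wC hwCm (M / ε) (hbound GLabel.C) hIg hgC]
      refine integral_congr_ae (hA6.mono fun ω hω => ?_)
      simp only [hwC_def, ← hω]
      have := heC0 (X ω)
      field_simp
    rw [e1, e2, e3]
    ring
  · -- Part 2
    have hIT : Integrable (fun ω => Y110 ω - Y111 ω) P := hI10.sub hI11
    have e4 : ∫ ω, (1 : ℝ) * ((Y110 ω - Y111 ω) * indG G GLabel.T ω) ∂P
        = ∫ ω, (1 : ℝ) * (fT (X ω) * e GLabel.T (X ω)) ∂P :=
      aux_key2 P hX hG (fun _ => (1 : ℝ)) measurable_const 1 (fun x => by norm_num)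
        hIT hfT
    simp only [one_mul] at e4
    have e5 : ∫ ω, (Y111 ω - Y110 ω) * indG G GLabel.T ω ∂P
        = ∫ ω, f (X ω) * e GLabel.T (X ω) ∂P := by
      have : ∫ ω, (Y111 ω - Y110 ω) * indG G GLabel.T ω ∂P
          = - ∫ ω, (Y110 ω - Y111 ω) * indG G GLabel.T ω ∂P := by
        rw [← integral_neg]
        refine integral_congr_ae (Filter.Eventually.of_forall fun ω => ?_)
        ring
      rw [this, e4, ← integral_neg]
      refine integral_congr_ae ?_
      filter_upwards [hA5, hffN] with ω h5 hfe
      have : fT (X ω) = - fN (X ω) := by linarith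
      rw [this, hfe]
      ring
    rw [e5]
    rw [show (fun ω => (e GLabel.T (X ω) / (P {ω | G ω = GLabel.T}).toReal) * f (X ω))
        = fun ω => (f (X ω) * e GLabel.T (X ω)) / (P {ω | G ω = GLabel.T}).toReal from
      funext fun ω => by ring]
    rw [integral_div]
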